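/- Assume 1+α₁β > 0, 1+α₂β > 0, μ − k₁² − k₂² > 0, and F(k) > μ, with F as above. Then det 𝒟(k) < 0, where 𝒟(k) is the symmetric matrix with D_xx = 2k₁²(1+β²)/R₀² − (α₁β+1), D_yy = 2k₂²(1+β²)/R₀² − (α₂β+1), D_xy = 2k₁k₂(1+β²)/R₀², R₀² = μ − k₁² − k₂². Consequently there exist nonzero vectors q, q̃ ∈ ℝ² with 𝒬(q;k) < 0 < 𝒬(q̃;k), where 𝒬(q;k) = D_xx q₁² + 2D_xy q₁q₂ + D_yy q₂². -/

import Mathlib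

lemma indef_of_det_neg (A B C : ℝ) (h : A * C - B ^ 2 < 0) :
    ∃ q qt : ℝ × ℝ, q ≠ 0 ∧ qt ≠ 0 ∧
      A * q.1 ^ 2 + 2 * B * q.1 * q.2 + C * q.2 ^ 2 < 0 ∧
      0 < A * qt.1 ^ 2 + 2 * B * qt.1 * qt.2 + C * qt.2 ^ 2 := by
  rcases lt_trichotomy A 0 with hA | hA | hA
  · refine ⟨(1, 0), (-B / A, 1), ?_, ?_, ?_, ?_⟩
    · simp [Prod.ext_iff]
    · simp [Prod.ext_iff]
    · simpa using hA
    · have hA' : A ≠ 0 := ne_of_lt hA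
      have : A * (-B / A) ^ 2 + 2 * B * (-B / A) * 1 + C * 1 ^ 2 = (A * C - B ^ 2) / A := by
        field_simp; ring
      rw [this]
      exact div_pos_of_neg_of_neg h hA
  · have hB : B ≠ 0 := by
      intro hB0; rw [hA, hB0] at h; simp at h
    refine ⟨((-1 - C) / (2 * B), 1), ((1 - C) / (2 * B), 1), ?_, ?_, ?_, ?_⟩
    · simp [Prod.ext_iff]
    · simp [Prod.ext_iff]
    · have : A * ((-1 - C) / (2 * B)) ^ 2 + 2 * B * ((-1 - C) / (2 * B)) * 1 + C * 1 ^ 2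
          = -1 := by rw [hA]; field_simp; ring
      rw [this]; norm_num
    · have : A * ((1 - C) / (2 * B)) ^ 2 + 2 * B * ((1 - C) / (2 * B)) * 1 + C * 1 ^ 2
          = 1 := by rw [hA]; field_simp; ring
      rw [this]; norm_num
  · refine ⟨(-B / A, 1), (1, 0), ?_, ?_, ?_, ?_⟩
    · simp [Prod.ext_iff]
    · simp [Prod.ext_iff]
    · have hA' : A ≠ 0 := ne_of_gt hA
      have : A * (-B / A) ^ 2 + 2 * B * (-B / A) * 1 + C * 1 ^ 2 = (A * C - B ^ 2) / A := by
        field_simp; ring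
      rw [this]
      exact div_neg_of_neg_of_pos h hA
    · simpa using hA

/-- Outside the ellipse `F(k) = μ`, with `1+α₁β > 0` and `1+α₂β > 0`, `det 𝒟(k) < 0` and the
quadratic form 𝒬 is indefinite. -/
theorem D_indefinite_outside_ellipse (α₁ α₂ β μ k₁ k₂ : ℝ)
    (h1 : 1 + α₁ * β > 0) (h2 : 1 + α₂ * β > 0)
    (hR : μ - k₁ ^ 2 - k₂ ^ 2 > 0)
    (hF : (1 + 2 * (1 + β ^ 2) / (1 + α₁ * β)) * k₁ ^ 2
        + (1 + 2 * (1 + β ^ 2) / (1 + α₂ * β)) * k₂ ^ 2 > μ) :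
    let R0sq := μ - k₁ ^ 2 - k₂ ^ 2
    let Dxx := 2 * k₁ ^ 2 * (1 + β ^ 2) / R0sq - (α₁ * β + 1)
    let Dyy := 2 * k₂ ^ 2 * (1 + β ^ 2) / R0sq - (α₂ * β + 1)
    let Dxy := 2 * k₁ * k₂ * (1 + β ^ 2) / R0sq
    Dxx * Dyy - Dxy ^ 2 < 0 ∧
      ∃ q qt : ℝ × ℝ, q ≠ 0 ∧ qt ≠ 0 ∧
        Dxx * q.1 ^ 2 + 2 * Dxy * q.1 * q.2 + Dyy * q.2 ^ 2 < 0 ∧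
        0 < Dxx * qt.1 ^ 2 + 2 * Dxy * qt.1 * qt.2 + Dyy * qt.2 ^ 2 := by
  intro R0sq Dxx Dyy Dxy
  have hr : (0:ℝ) < R0sq := hR
  have hr' : R0sq ≠ 0 := ne_of_gt hr
  have ha1 : (1 + α₁ * β) ≠ 0 := ne_of_gt h1
  have ha2 : (1 + α₂ * β) ≠ 0 := ne_of_gt h2
  have key : R0sq * ((1 + α₁ * β) * (1 + α₂ * β))
      < 2 * (1 + β ^ 2) * (k₁ ^ 2 * (1 + α₂ * β) + k₂ ^ 2 * (1 + α₁ * β)) := by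
    have h := sub_pos.mpr hF
    have hprod := mul_pos (mul_pos h h1) h2
    have expand : ((1 + 2 * (1 + β ^ 2) / (1 + α₁ * β)) * k₁ ^ 2
        + (1 + 2 * (1 + β ^ 2) / (1 + α₂ * β)) * k₂ ^ 2 - μ) * (1 + α₁ * β) * (1 + α₂ * β)
        = 2 * (1 + β ^ 2) * (k₁ ^ 2 * (1 + α₂ * β) + k₂ ^ 2 * (1 + α₁ * β))
          - (μ - k₁ ^ 2 - k₂ ^ 2) * ((1 + α₁ * β) * (1 + α₂ * β)) := by
      have e1 : 2 * (1 + β ^ 2) / (1 + α₁ * β) * (1 + α₁ * β) = 2 * (1 + β ^ 2) :=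
        div_mul_cancel₀ _ ha1
      have e2 : 2 * (1 + β ^ 2) / (1 + α₂ * β) * (1 + α₂ * β) = 2 * (1 + β ^ 2) :=
        div_mul_cancel₀ _ ha2
      linear_combination (k₁ ^ 2 * (1 + α₂ * β)) * e1 + (k₂ ^ 2 * (1 + α₁ * β)) * e2
    rw [expand] at hprod
    show (μ - k₁ ^ 2 - k₂ ^ 2) * ((1 + α₁ * β) * (1 + α₂ * β))
      < 2 * (1 + β ^ 2) * (k₁ ^ 2 * (1 + α₂ * β) + k₂ ^ 2 * (1 + α₁ * β))
    linarith
  have hdet : Dxx * Dyy - Dxy ^ 2 < 0 := by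
    show (2 * k₁ ^ 2 * (1 + β ^ 2) / R0sq - (α₁ * β + 1)) *
        (2 * k₂ ^ 2 * (1 + β ^ 2) / R0sq - (α₂ * β + 1)) -
        (2 * k₁ * k₂ * (1 + β ^ 2) / R0sq) ^ 2 < 0
    rw [div_sub' hr', div_sub' hr', div_pow, div_mul_div_comm,
      div_sub_div _ _ (by positivity : R0sq * R0sq ≠ 0) (by positivity : R0sq ^ 2 ≠ 0)]
    apply div_neg_of_neg_of_pos
    · nlinarith [mul_pos (mul_pos (mul_pos hr hr) hr) (sub_pos.mpr key)]
    · positivity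
  exact ⟨hdet, indef_of_det_neg _ _ _ hdet⟩
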